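/- For every C ≥ 128, every K > 0 and every odd natural number T ≥ 3 there exists a constant C' = C'(C,K,T) > 0 such that the following holds. Let (p,Q) be a block-model parameter pair on 2 communities with p₁ ≤ p₂, and set μ = p₁Q₁₁ + p₂Q₁₂, λ = p₁Q₁₂ + p₂Q₂₂. Assume: (i) p₁|Q₁₁| + p₂|Q₁₂| ≤ C|μ|; (ii) p₁|Q₁₂| + p₂|Q₂₂| ≤ C|λ|; (iii) (4C²)^T · |p₁μ^T + p₂λ^T| ≤ p₁|μ|^T + p₂|λ|^T; (iv) p₁|Q₁₁| ≤ |Q₁₂|; and (v) |Q₁₂| ≤ p₁. Then every finite simple graph H with at least one vertex satisfying |Φ_{p,Q}(H)|^{1/|V(H)|} ≤ K · (p₁·(p₁|Q₁₁| + p₂|Q₁₂|)^T + p₂·(p₁|Q₁₂| + p₂|Q₂₂|)^T)^{1/(T+1)} also satisfies Ψ_{p,Q}(H) ≤ C' · Ψ_{p,Q}(Star_{T−1}). -/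

import Mathlib

set_option linter.unusedVariables false

open Finset

open Finset

/-- The Fourier coefficient Φ_{p,Q}(H) of a finite simple graph `H`. -/
noncomputable def Phi {k : ℕ} (p : Fin k → ℝ) (Q : Fin k → Fin k → ℝ)
    (hQ : ∀ i j, Q i j = Q j i) {V : Type} [Fintype V] [DecidableEq V]
    (H : SimpleGraph V) [DecidableRel H.Adj] : ℝ :=
  ∑ x : V → Fin k, (∏ v, p (x v)) *
    ∏ e ∈ H.edgeFinset,
      Sym2.lift ⟨fun u v => Q (x u) (x v), fun u v => hQ (x u) (x v)⟩ e

/-- The partition value Ψ_{p,Q}(H) = |Φ_{p,Q}(H)|^{1/|V(H)|}. -/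
noncomputable def Psi {k : ℕ} (p : Fin k → ℝ) (Q : Fin k → Fin k → ℝ)
    (hQ : ∀ i j, Q i j = Q j i) {V : Type} [Fintype V] [DecidableEq V]
    (H : SimpleGraph V) [DecidableRel H.Adj] : ℝ :=
  |Phi p Q hQ H| ^ ((Fintype.card V : ℝ)⁻¹)

/-- The star graph with one center (vertex 0) joined to `t` leaves. -/
def StarGraph (t : ℕ) : SimpleGraph (Fin (t + 1)) where
  Adj u v := u ≠ v ∧ (u = 0 ∨ v = 0)
  symm := ⟨fun u v h => ⟨h.1.symm, h.2.symm⟩⟩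
  loopless := ⟨fun u h => h.1 rfl⟩

instance (t : ℕ) : DecidableRel (StarGraph t).Adj :=
  fun u v => inferInstanceAs (Decidable (u ≠ v ∧ (u = 0 ∨ v = 0)))

/-- The cycle graph on 4 vertices. -/
def Cyc4 : SimpleGraph (Fin 4) where
  Adj u v := u ≠ v ∧ ((u.val + 1) % 4 = v.val ∨ (v.val + 1) % 4 = u.val)
  symm := ⟨fun u v h => ⟨h.1.symm, h.2.symm⟩⟩
  loopless := ⟨fun u h => h.1 rfl⟩

instance : DecidableRel Cyc4.Adj :=
  fun u v => inferInstanceAs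
    (Decidable (u ≠ v ∧ ((u.val + 1) % 4 = v.val ∨ (v.val + 1) % 4 = u.val)))


set_option maxHeartbeats 1000000

lemma star_edge_prod (t : ℕ) (f : Sym2 (Fin (t+1)) → ℝ) :
    ∏ e ∈ (StarGraph t).edgeFinset, f e = ∏ i : Fin t, f s(0, i.succ) := by
  refine (Finset.prod_bij (fun (i : Fin t) (_ : i ∈ univ) => s(0, i.succ)) ?_ ?_ ?_ ?_).symm
  · intro i _
    rw [SimpleGraph.mem_edgeFinset, SimpleGraph.mem_edgeSet]
    exact ⟨(Fin.succ_ne_zero i).symm, Or.inl rfl⟩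
  · intro a _ b _ h
    rw [Sym2.eq_iff] at h
    rcases h with ⟨-, h⟩ | ⟨h, -⟩
    · exact Fin.succ_injective _ h
    · exact absurd h.symm (Fin.succ_ne_zero b)
  · intro e he
    rw [SimpleGraph.mem_edgeFinset] at he
    induction e using Sym2.ind with
    | _ u v =>
      rw [SimpleGraph.mem_edgeSet] at he
      obtain ⟨hne, h0 | h0⟩ := he
      · subst h0
        obtain ⟨a, ha⟩ := Fin.exists_succ_eq.mpr (Ne.symm hne)
        exact ⟨a, mem_univ _, by simp [ha]⟩
      · subst h0
        obtain ⟨a, ha⟩ := Fin.exists_succ_eq.mpr hne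
        exact ⟨a, mem_univ _, by simp [ha, Sym2.eq_swap]⟩
  · intro a _; rfl

lemma phi_star {k : ℕ} (p : Fin k → ℝ) (Q : Fin k → Fin k → ℝ)
    (hQ : ∀ i j, Q i j = Q j i) (t : ℕ) :
    Phi p Q hQ (StarGraph t) = ∑ i : Fin k, p i * (∑ j, p j * Q i j) ^ t := by
  unfold Phi
  rw [← Equiv.sum_comp (Fin.consEquiv (fun _ : Fin (t+1) => Fin k))]
  rw [Fintype.sum_prod_type]
  refine Finset.sum_congr rfl fun i _ => ?_
  have key : ∀ g : Fin t → Fin k,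
      (∏ v, p ((Fin.consEquiv (fun _ : Fin (t+1) => Fin k)) (i, g) v)) *
        ∏ e ∈ (StarGraph t).edgeFinset,
          Sym2.lift ⟨fun u v => Q ((Fin.consEquiv (fun _ : Fin (t+1) => Fin k)) (i, g) u)
              ((Fin.consEquiv (fun _ : Fin (t+1) => Fin k)) (i, g) v),
            fun u v => hQ _ _⟩ e
      = p i * ∏ j : Fin t, (p (g j) * Q i (g j)) := by
    intro g
    rw [star_edge_prod]
    simp only [Fin.consEquiv_apply, Fin.prod_univ_succ, Fin.cons_zero, Fin.cons_succ,
      Sym2.lift_mk]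
    rw [mul_assoc, ← Finset.prod_mul_distrib]
  rw [Finset.sum_congr rfl fun g _ => key g]
  rw [← Finset.mul_sum]
  congr 1
  rw [← Fintype.prod_sum (fun _ : Fin t => fun c : Fin k => p c * Q i c)]
  rw [Finset.prod_const]
  simp

private lemma aux_two_le (C : ℝ) (h : 1 ≤ C) : (2:ℝ) ≤ 4 * C ^ 2 := by nlinarith

private lemma aux_v3u (M W u v : ℝ) (hM : 2 ≤ M) (hW : 0 ≤ W) (h1 : v - u ≤ W)
    (h2 : M * W ≤ u + v) (hu : 0 ≤ u) (hv : 0 ≤ v) : v ≤ 3 * u := by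
  nlinarith [mul_le_mul_of_nonneg_left h1 (by linarith : (0:ℝ) ≤ M)]

private lemma aux_two_mul (A Y D : ℝ) (hA : 0 ≤ A) (hY : 0 ≤ Y) (hD : 2 ≤ D) :
    2 * (A * Y) ≤ A * (D * Y) := by nlinarith [mul_nonneg (mul_nonneg hA hY) (by linarith : (0:ℝ) ≤ D - 2)]

/-- between-community cancellations with |Q₁₂| ≤ p₁ and T ≥ 3:
Star_{T-1} dominates. -/
theorem stmt16 (C : ℝ) (hC : 128 ≤ C) (K : ℝ) (hK : 0 < K)
    (T : ℕ) (hT : 3 ≤ T) (hTodd : Odd T) :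
    ∃ C' : ℝ, 0 < C' ∧
      ∀ (p : Fin 2 → ℝ) (Q : Fin 2 → Fin 2 → ℝ),
        (∀ i, 0 ≤ p i) → (∑ i, p i = 1) →
        ∀ (hQ : ∀ i j, Q i j = Q j i),
        (∀ i j, |Q i j| ≤ 1) → p 0 ≤ p 1 →
        p 0 * |Q 0 0| + p 1 * |Q 0 1| ≤ C * |p 0 * Q 0 0 + p 1 * Q 0 1| →
        p 0 * |Q 0 1| + p 1 * |Q 1 1| ≤ C * |p 0 * Q 0 1 + p 1 * Q 1 1| →
        (4 * C ^ 2) ^ T *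
            |p 0 * (p 0 * Q 0 0 + p 1 * Q 0 1) ^ T +
              p 1 * (p 0 * Q 0 1 + p 1 * Q 1 1) ^ T| ≤
          p 0 * |p 0 * Q 0 0 + p 1 * Q 0 1| ^ T +
            p 1 * |p 0 * Q 0 1 + p 1 * Q 1 1| ^ T →
        p 0 * |Q 0 0| ≤ |Q 0 1| → |Q 0 1| ≤ p 0 →
      ∀ (V : Type) [Fintype V] [DecidableEq V] (H : SimpleGraph V) [DecidableRel H.Adj],
        Nonempty V →
        |Phi p Q hQ H| ^ ((Fintype.card V : ℝ)⁻¹) ≤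
          K * (p 0 * (p 0 * |Q 0 0| + p 1 * |Q 0 1|) ^ T +
                p 1 * (p 0 * |Q 0 1| + p 1 * |Q 1 1|) ^ T) ^ (1 / ((T : ℝ) + 1)) →
        Psi p Q hQ H ≤ C' * Psi p Q hQ (StarGraph (T - 1)) := by
  refine ⟨4 * C * K, by positivity, ?_⟩
  intro p Q hp hsum hQ hQ1 hple h1 h2 hcanc h4 h5 V _ _ H _ hne hyp
  have hC1 : (1:ℝ) ≤ C := by linarith
  have hC0 : (0:ℝ) ≤ C := by linarith
  have hp0 : 0 ≤ p 0 := hp 0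
  have hp1 : 0 ≤ p 1 := hp 1
  have hsum2 : p 0 + p 1 = 1 := by simpa [Fin.sum_univ_two] using hsum
  have hp1le : p 1 ≤ 1 := by linarith
  -- notation
  set μ : ℝ := p 0 * Q 0 0 + p 1 * Q 0 1 with hμ
  set lam : ℝ := p 0 * Q 0 1 + p 1 * Q 1 1 with hlam
  set s : ℝ := |μ| with hs
  set t' : ℝ := |lam| with ht'
  set a : ℝ := p 0 * |Q 0 0| + p 1 * |Q 0 1| with ha
  set b : ℝ := p 0 * |Q 0 1| + p 1 * |Q 1 1| with hb
  set B : ℝ := p 0 * a ^ T + p 1 * b ^ T with hB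
  set X : ℝ := p 0 * s ^ (T - 1) with hX
  have hs0 : 0 ≤ s := abs_nonneg _
  have ht0 : 0 ≤ t' := abs_nonneg _
  have ha0 : 0 ≤ a := by positivity
  have hb0 : 0 ≤ b := by positivity
  have hB0 : 0 ≤ B := by positivity
  have hX0 : 0 ≤ X := by positivity
  have hTR : (0:ℝ) < (T:ℝ) := by exact_mod_cast (by omega : 0 < T)
  have hT1R : (0:ℝ) < (T:ℝ) + 1 := by linarith
  -- s ≤ 2 p0
  have hsa : s ≤ a := by
    rw [hs, hμ, ha]
    calc |p 0 * Q 0 0 + p 1 * Q 0 1| ≤ |p 0 * Q 0 0| + |p 1 * Q 0 1| := abs_add_le _ _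
      _ = p 0 * |Q 0 0| + p 1 * |Q 0 1| := by
          rw [abs_mul, abs_mul, abs_of_nonneg hp0, abs_of_nonneg hp1]
  have ha2p : a ≤ 2 * p 0 := by
    have h6 : p 1 * |Q 0 1| ≤ |Q 0 1| := mul_le_of_le_one_left (abs_nonneg _) hp1le
    rw [ha]; linarith
  have hs2p : s ≤ 2 * p 0 := hsa.trans ha2p
  -- cancellation: p1 t'^T ≤ 3 p0 s^T
  set M : ℝ := (4 * C ^ 2) ^ T with hM
  have hM2 : (2:ℝ) ≤ M := by
    have h24 : (2:ℝ) ≤ 4 * C ^ 2 := aux_two_le C hC1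
    have : (4 * C ^ 2) ≤ M := le_self_pow₀ (by linarith) (by omega)
    linarith
  set W : ℝ := |p 0 * μ ^ T + p 1 * lam ^ T| with hW
  have hW0 : 0 ≤ W := abs_nonneg _
  have hu : p 0 * s ^ T = |p 0 * μ ^ T| := by
    rw [abs_mul, abs_pow, abs_of_nonneg hp0]
  have hv : p 1 * t' ^ T = |p 1 * lam ^ T| := by
    rw [abs_mul, abs_pow, abs_of_nonneg hp1]
  have hvW : p 1 * t' ^ T - p 0 * s ^ T ≤ W := by
    rw [hu, hv]
    have e : p 1 * lam ^ T = (p 0 * μ ^ T + p 1 * lam ^ T) + -(p 0 * μ ^ T) := by ring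
    calc |p 1 * lam ^ T| - |p 0 * μ ^ T|
        ≤ (W + |-(p 0 * μ ^ T)|) - |p 0 * μ ^ T| := by
          have := abs_add_le (p 0 * μ ^ T + p 1 * lam ^ T) (-(p 0 * μ ^ T))
          rw [← e] at this
          linarith
      _ = |p 0 * μ ^ T| - |p 0 * μ ^ T| + W := by rw [abs_neg]; ring
      _ = W := by ring
  have hMW : M * W ≤ p 0 * s ^ T + p 1 * t' ^ T := hcanc
  have hu0 : 0 ≤ p 0 * s ^ T := by positivity
  have hv0 : 0 ≤ p 1 * t' ^ T := by positivity
  have hv3u : p 1 * t' ^ T ≤ 3 * (p 0 * s ^ T) :=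
    aux_v3u M W _ _ hM2 hW0 hvW hMW hu0 hv0
  -- B bound
  set D : ℝ := (4 * C) ^ T with hD
  have hD0 : 0 ≤ D := by positivity
  have hD2 : (2:ℝ) ≤ D := by
    have : (4 * C) ≤ D := le_self_pow₀ (by linarith) (by omega)
    linarith
  have hCT0 : (0:ℝ) ≤ C ^ T := by positivity
  have hBle : B ≤ D * (p 0 * s ^ T) := by
    have haT : a ^ T ≤ C ^ T * s ^ T := by
      calc a ^ T ≤ (C * s) ^ T := pow_le_pow_left₀ ha0 h1 T
        _ = C ^ T * s ^ T := mul_pow _ _ _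
    have hbT : b ^ T ≤ C ^ T * t' ^ T := by
      calc b ^ T ≤ (C * t') ^ T := pow_le_pow_left₀ hb0 h2 T
        _ = C ^ T * t' ^ T := mul_pow _ _ _
    have h1' : p 0 * a ^ T ≤ p 0 * (C ^ T * s ^ T) := mul_le_mul_of_nonneg_left haT hp0
    have h2' : p 1 * b ^ T ≤ p 1 * (C ^ T * t' ^ T) := mul_le_mul_of_nonneg_left hbT hp1
    have h3' : C ^ T * (p 1 * t' ^ T) ≤ C ^ T * (3 * (p 0 * s ^ T)) :=
      mul_le_mul_of_nonneg_left hv3u hCT0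
    have h44 : (4:ℝ) ≤ 4 ^ T := le_self_pow₀ (by norm_num) (by omega)
    have hD4 : 4 * C ^ T ≤ D := by
      rw [hD, mul_pow]
      exact mul_le_mul_of_nonneg_right h44 hCT0
    have h5' := mul_le_mul_of_nonneg_right hD4 hu0
    have h6' := mul_le_mul_of_nonneg_left hv3u hCT0
    linarith [h1', h2', h3', h5', h6']
  -- key power inequality
  have hq : s ^ T = s ^ (T - 1) * s := by
    rw [← pow_succ]
    congr 1
    omega
  have hkey : B ^ T ≤ (D * X) ^ (T + 1) := by
    have hAX0 : 0 ≤ D * X := by positivity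
    have hY0 : 0 ≤ p 0 * s ^ (T - 1) := by positivity
    calc B ^ T ≤ (D * (p 0 * s ^ T)) ^ T :=
          pow_le_pow_left₀ hB0 hBle T
      _ = ((D * X) * s) ^ T := by rw [hq, hX]; ring_nf
      _ = (D * X) ^ T * (s ^ (T - 1) * s) := by rw [mul_pow, hq]
      _ ≤ (D * X) ^ T * (s ^ (T - 1) * (2 * p 0)) := by
          have := mul_le_mul_of_nonneg_left hs2p (pow_nonneg hs0 (T - 1))
          exact mul_le_mul_of_nonneg_left this (pow_nonneg hAX0 T)
      _ = 2 * ((D * X) ^ T * (p 0 * s ^ (T - 1))) := by ring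
      _ ≤ (D * X) ^ T * (D * X) := aux_two_mul _ _ _ (pow_nonneg hAX0 T) hX0 hD2
      _ = (D * X) ^ (T + 1) := (pow_succ _ _).symm
  -- rpow step
  have hTne : (T:ℝ) ≠ 0 := ne_of_gt hTR
  have hr : B ^ (1 / ((T:ℝ) + 1)) ≤ (D * X) ^ ((T:ℝ)⁻¹) := by
    have hAX0 : 0 ≤ D * X := by positivity
    have h := Real.rpow_le_rpow (by positivity) hkey
      (by positivity : (0:ℝ) ≤ ((T:ℝ) * ((T:ℝ) + 1))⁻¹)
    rw [← Real.rpow_natCast B T, ← Real.rpow_natCast (D * X) (T + 1),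
      ← Real.rpow_mul hB0, ← Real.rpow_mul hAX0] at h
    have e1 : (T:ℝ) * ((T:ℝ) * ((T:ℝ) + 1))⁻¹ = 1 / ((T:ℝ) + 1) := by
      field_simp
    have e2 : ((T + 1 : ℕ):ℝ) * ((T:ℝ) * ((T:ℝ) + 1))⁻¹ = (T:ℝ)⁻¹ := by
      push_cast
      field_simp
    rw [e1, e2] at h
    exact h
  have hy : (D * X) ^ ((T:ℝ)⁻¹) = (4 * C) * X ^ ((T:ℝ)⁻¹) := by
    rw [Real.mul_rpow hD0 hX0]
    congr 1
    rw [hD, ← Real.rpow_natCast (4 * C) T, ← Real.rpow_mul (by linarith),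
      mul_inv_cancel₀ hTne, Real.rpow_one]
  -- star side
  have hev : Even (T - 1) := Nat.Odd.sub_odd hTodd odd_one
  have hΦs : Phi p Q hQ (StarGraph (T - 1)) = p 0 * μ ^ (T - 1) + p 1 * lam ^ (T - 1) := by
    rw [phi_star]
    rw [Fin.sum_univ_two, Fin.sum_univ_two, Fin.sum_univ_two, hQ 1 0]
  have hμev : μ ^ (T - 1) = s ^ (T - 1) := (hev.pow_abs μ).symm
  have hlamev : lam ^ (T - 1) = t' ^ (T - 1) := (hev.pow_abs lam).symm
  have hΦs' : Phi p Q hQ (StarGraph (T - 1)) = X + p 1 * t' ^ (T - 1) := by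
    rw [hΦs, hμev, hlamev, hX]
  have hΦs0 : 0 ≤ Phi p Q hQ (StarGraph (T - 1)) := by
    rw [hΦs']; positivity
  have hXΦ : X ≤ Phi p Q hQ (StarGraph (T - 1)) := by
    rw [hΦs']
    have : 0 ≤ p 1 * t' ^ (T - 1) := by positivity
    linarith
  have hcard : ((Fintype.card (Fin (T - 1 + 1)) : ℕ) : ℝ) = (T:ℝ) := by
    rw [Fintype.card_fin]
    congr 1
    omega
  have hPsiStar : X ^ ((T:ℝ)⁻¹) ≤ Psi p Q hQ (StarGraph (T - 1)) := by
    unfold Psi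
    rw [hcard, abs_of_nonneg hΦs0]
    exact Real.rpow_le_rpow hX0 hXΦ (by positivity)
  -- conclude
  have hfinal : K * B ^ (1 / ((T:ℝ) + 1)) ≤ 4 * C * K * Psi p Q hQ (StarGraph (T - 1)) := by
    calc K * B ^ (1 / ((T:ℝ) + 1)) ≤ K * ((4 * C) * X ^ ((T:ℝ)⁻¹)) := by
          apply mul_le_mul_of_nonneg_left _ hK.le
          rw [← hy]; exact hr
      _ = 4 * C * K * X ^ ((T:ℝ)⁻¹) := by ring
      _ ≤ 4 * C * K * Psi p Q hQ (StarGraph (T - 1)) := by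
          apply mul_le_mul_of_nonneg_left hPsiStar (by positivity)
  calc Psi p Q hQ H = |Phi p Q hQ H| ^ ((Fintype.card V : ℝ)⁻¹) := rfl
    _ ≤ K * B ^ (1 / ((T:ℝ) + 1)) := hyp
    _ ≤ 4 * C * K * Psi p Q hQ (StarGraph (T - 1)) := hfinal
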